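/- arXiv:1704.00672 — 2 statements merged into one kernel-verified Lean document; each statement's English description precedes it below -/
import Mathlib

section
/- Let R be a henselian discrete valuation ring whose fraction field K has characteristic 0, with uniformizer t, and let q ≥ 1 be an integer. If I is a radical, t-saturated ideal of the polynomial ring R[X_1,…,X_n], then the extended ideal I·R_q[X_1,…,X_n] is a radical ideal of R_q[X_1,…,X_n]. -/
open Polynomial

/-- An ideal `I` of `A[X₁,…,Xₙ]` is `π`-saturated if `π·f ∈ I` implies `f ∈ I`. -/
def PiSaturated {A : Type} [CommRing A] (π : A) {n : ℕ}
    (I : Ideal (MvPolynomial (Fin n) A)) : Prop :=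
  ∀ f : MvPolynomial (Fin n) A, MvPolynomial.C π * f ∈ I → f ∈ I

/-- Core lemma: if `A` is reduced, `a` is a nonzerodivisor, and `q` is nonzero modulo
every prime not containing `a`, then `A[T]/(T^q - a)` is reduced. -/
lemma reduced_adjoinRoot_pow_sub
    {A : Type} [CommRing A] [IsReduced A] (a : A)
    (hreg : ∀ x : A, a * x = 0 → x = 0)
    {q : ℕ} (hq : 1 ≤ q)
    (H : ∀ P : Ideal A, P.IsPrime → a ∉ P → (q : A) ∉ P) :
    IsReduced (AdjoinRoot ((Polynomial.X : Polynomial A) ^ q - Polynomial.C a)) := by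
  rcases subsingleton_or_nontrivial A with hA | hA
  · constructor
    intro z _
    obtain ⟨g0, rfl⟩ := AdjoinRoot.mk_surjective z
    rw [Subsingleton.elim g0 0, map_zero]
  set f₀ : Polynomial A := X ^ q - C a with hf₀
  have hq0 : q ≠ 0 := by omega
  have hmono : f₀.Monic := monic_X_pow_sub_C a hq0
  have hdegf₀ : f₀.degree = q := degree_X_pow_sub_C (by omega) a
  constructor
  intro z hz
  obtain ⟨g0, rfl⟩ := AdjoinRoot.mk_surjective z
  set g : Polynomial A := g0 %ₘ f₀ with hg
  have hdeg : g.degree < (q : WithBot ℕ) := by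
    have := degree_modByMonic_lt g0 hmono
    rwa [hdegf₀] at this
  have hmkeq : AdjoinRoot.mk f₀ g0 = AdjoinRoot.mk f₀ g := by
    have hdvd : f₀ ∣ g0 - g := by
      refine ⟨g0 /ₘ f₀, ?_⟩
      have := modByMonic_add_div g0 f₀
      rw [hg]
      linear_combination (norm := ring_nf) -this
    have h0 : AdjoinRoot.mk f₀ (g0 - g) = 0 := AdjoinRoot.mk_eq_zero.mpr hdvd
    rw [map_sub, sub_eq_zero] at h0
    exact h0
  rw [hmkeq] at hz ⊢
  suffices hgz : g = 0 by rw [hgz, map_zero]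
  refine Polynomial.ext fun i => ?_
  rw [coeff_zero]
  have hnil : IsNilpotent (a * g.coeff i) := by
    rw [nilpotent_iff_mem_prime]
    intro P hP
    by_cases haP : a ∈ P
    · exact Ideal.mul_mem_right _ _ haP
    have hqP := H P hP haP
    haveI := hP
    let D := A ⧸ P
    let F := FractionRing D
    let π : A →+* F := (algebraMap D F).comp (Ideal.Quotient.mk P)
    have hπker : ∀ x : A, π x = 0 → x ∈ P := by
      intro x hx
      have h0 : Ideal.Quotient.mk P x = 0 :=
        IsFractionRing.injective D F
          (show algebraMap D F (Ideal.Quotient.mk P x) = algebraMap D F 0 by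
            rw [map_zero]; exact hx)
      exact (Ideal.Quotient.eq_zero_iff_mem).mp h0
    have hc : π a ≠ 0 := fun h => haP (hπker _ h)
    have hqF : ((q : ℕ) : F) ≠ 0 := by
      intro h
      exact hqP (hπker _ (by simpa using h))
    set fF : Polynomial F := X ^ q - C (π a) with hfF
    have hdegfF : fF.degree = q := degree_X_pow_sub_C (by omega) _
    have hsep : fF.Separable := separable_X_pow_sub_C _ hqF hc
    have hroot : (AdjoinRoot.root fF) ^ q = AdjoinRoot.of fF (π a) := by
      have h := AdjoinRoot.eval₂_root fF
      rw [hfF, eval₂_sub, eval₂_X_pow, eval₂_C, sub_eq_zero] at h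
      exact h
    let θ : AdjoinRoot f₀ →+* AdjoinRoot fF :=
      AdjoinRoot.lift ((AdjoinRoot.of fF).comp π) (AdjoinRoot.root fF)
        (by rw [hf₀, eval₂_sub, eval₂_X_pow, eval₂_C, sub_eq_zero, hroot]; rfl)
    have hθ : θ (AdjoinRoot.mk f₀ g) = AdjoinRoot.mk fF (g.map π) := by
      rw [AdjoinRoot.lift_mk, ← AdjoinRoot.aeval_eq, Polynomial.aeval_def,
        Polynomial.eval₂_map, AdjoinRoot.algebraMap_eq]
    obtain ⟨m, hm⟩ := hz
    have hdvdm : fF ∣ (g.map π) ^ m := by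
      rw [← AdjoinRoot.mk_eq_zero, map_pow, ← hθ, ← map_pow, hm, map_zero]
    have hm0 : m ≠ 0 := by
      rintro rfl
      rw [pow_zero] at hdvdm
      have h1 : (1 : Polynomial F) = 0 :=
        eq_zero_of_dvd_of_degree_lt hdvdm
          (by rw [hdegfF, degree_one]; exact_mod_cast (by omega : 0 < q))
      simpa using h1
    have hdvd : fF ∣ g.map π := (hsep.squarefree.dvd_pow_iff_dvd hm0).mp hdvdm
    have hmap0 : g.map π = 0 := by
      refine eq_zero_of_dvd_of_degree_lt hdvd ?_
      calc (g.map π).degree ≤ g.degree := degree_map_le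
        _ < q := hdeg
        _ = fF.degree := hdegfF.symm
    have hcoeff : π (g.coeff i) = 0 := by
      have := congrArg (fun p => Polynomial.coeff p i) hmap0
      simpa [Polynomial.coeff_map] using this
    exact Ideal.mul_mem_left _ a (hπker _ hcoeff)
  exact hreg _ hnil.eq_zero

/-- Let `R` be a henselian discrete valuation ring whose fraction field has characteristic
zero, `t` a uniformizer of `R` and `q ≥ 1`.  If `I` is a radical, `t`-saturated ideal of
`R[X₁,…,Xₙ]`, then the extension of `I` to `R_q[X₁,…,Xₙ]`, where `R_q = R[T]/(T^q - t)`,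
is a radical ideal. -/
theorem extended_ideal_radical
    (R : Type) [CommRing R] [IsDomain R] [IsDiscreteValuationRing R] [HenselianLocalRing R]
    [CharZero (FractionRing R)]
    (t : R) (ht : Irreducible t) (q : ℕ) (hq : 1 ≤ q) (n : ℕ)
    (I : Ideal (MvPolynomial (Fin n) R)) (hrad : I.IsRadical) (hsat : PiSaturated t I) :
    (I.map (MvPolynomial.map
      (algebraMap R (AdjoinRoot (Polynomial.X ^ q - Polynomial.C t))))).IsRadical := by
  classical
  -- Notation
  set p : Polynomial R := X ^ q - C t with hp
  set φ : MvPolynomial (Fin n) R →+* MvPolynomial (Fin n) (AdjoinRoot p) :=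
    MvPolynomial.map (algebraMap R (AdjoinRoot p)) with hφ
  set J : Ideal (MvPolynomial (Fin n) (AdjoinRoot p)) := I.map φ with hJ
  set a : MvPolynomial (Fin n) R ⧸ I := Ideal.Quotient.mk I (MvPolynomial.C t) with ha
  set f₀ : Polynomial (MvPolynomial (Fin n) R ⧸ I) := X ^ q - C a with hf₀
  haveI hAred : IsReduced (MvPolynomial (Fin n) R ⧸ I) := (Ideal.isRadical_iff_quotient_reduced I).mp hrad
  -- `q ≠ 0` in `R`
  have hqR : (q : R) ≠ 0 := by
    intro h
    have h2 : ((q : ℕ) : FractionRing R) = 0 := by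
      rw [← map_natCast (algebraMap R (FractionRing R)) q, h, map_zero]
    exact Nat.cast_ne_zero.mpr (by omega) h2
  -- The root relation in `(AdjoinRoot p)`
  have hrootp : (AdjoinRoot.root p) ^ q = algebraMap R (AdjoinRoot p) t := by
    have h := AdjoinRoot.eval₂_root p
    rw [hp, eval₂_sub, eval₂_X_pow, eval₂_C, sub_eq_zero] at h
    rw [AdjoinRoot.algebraMap_eq]
    exact h
  -- The root relation in `B := AdjoinRoot f₀`
  have hrootf₀ : (AdjoinRoot.root f₀) ^ q = AdjoinRoot.of f₀ a := by
    have h := AdjoinRoot.eval₂_root f₀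
    rw [hf₀, eval₂_sub, eval₂_X_pow, eval₂_C, sub_eq_zero] at h
    exact h
  -- The map ψ : Sq → B
  set ρ : R →+* AdjoinRoot f₀ :=
    ((AdjoinRoot.of f₀).comp (Ideal.Quotient.mk I)).comp MvPolynomial.C with hρ
  have hχ0 : p.eval₂ ρ (AdjoinRoot.root f₀) = 0 := by
    rw [hp, eval₂_sub, eval₂_X_pow, eval₂_C, sub_eq_zero, hrootf₀]
    rfl
  set χ : (AdjoinRoot p) →+* AdjoinRoot f₀ := AdjoinRoot.lift ρ (AdjoinRoot.root f₀) hχ0 with hχ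
  set ψ : MvPolynomial (Fin n) (AdjoinRoot p) →+* AdjoinRoot f₀ :=
    MvPolynomial.eval₂Hom χ
      (fun i => AdjoinRoot.of f₀ (Ideal.Quotient.mk I (MvPolynomial.X i))) with hψ
  -- ψ ∘ φ = of f₀ ∘ mk I
  have hμ : ψ.comp φ = (AdjoinRoot.of f₀).comp (Ideal.Quotient.mk I) := by
    apply MvPolynomial.ringHom_ext
    · intro r
      have e1 : φ (MvPolynomial.C r) = MvPolynomial.C (AdjoinRoot.of p r) := by
        rw [hφ, MvPolynomial.map_C, AdjoinRoot.algebraMap_eq]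
      rw [RingHom.comp_apply, e1, RingHom.comp_apply]
      have e2 : ψ (MvPolynomial.C (AdjoinRoot.of p r)) = χ (AdjoinRoot.of p r) := by
        rw [hψ]; exact MvPolynomial.eval₂Hom_C _ _ _
      rw [e2, hχ, AdjoinRoot.lift_of]
      rfl
    · intro i
      simp only [RingHom.comp_apply, hφ, MvPolynomial.map_X, hψ, MvPolynomial.eval₂Hom_X']
  -- J is contained in the kernel of ψ
  have hJker : ∀ s ∈ J, ψ s = 0 := by
    intro s hs
    rw [hJ] at hs
    refine Submodule.span_induction ?_ ?_ ?_ ?_ hs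
    · rintro x ⟨y, hy, rfl⟩
      have : ψ (φ y) = (AdjoinRoot.of f₀) (Ideal.Quotient.mk I y) := by
        rw [← RingHom.comp_apply, hμ]; rfl
      rw [this, Ideal.Quotient.eq_zero_iff_mem.mpr hy, map_zero]
    · exact map_zero ψ
    · intro x y _ _ hx hy; rw [map_add, hx, hy, add_zero]
    · intro c x _ hx; rw [smul_eq_mul, map_mul, hx, mul_zero]
  -- The map β : B → Sq/J
  have hαker : ∀ s ∈ I, (Ideal.Quotient.mk J).comp φ s = 0 := by
    intro s hs
    exact Ideal.Quotient.eq_zero_iff_mem.mpr (Ideal.mem_map_of_mem φ hs)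
  set α : (MvPolynomial (Fin n) R ⧸ I) →+* MvPolynomial (Fin n) (AdjoinRoot p) ⧸ J :=
    Ideal.Quotient.lift I ((Ideal.Quotient.mk J).comp φ) hαker with hα
  set w : MvPolynomial (Fin n) (AdjoinRoot p) ⧸ J :=
    Ideal.Quotient.mk J (MvPolynomial.C (AdjoinRoot.root p)) with hw
  have hβ0 : f₀.eval₂ α w = 0 := by
    rw [hf₀, eval₂_sub, eval₂_X_pow, eval₂_C, sub_eq_zero, hw]
    rw [← map_pow, ← map_pow, hrootp]
    have h3 : α a = Ideal.Quotient.mk J (φ (MvPolynomial.C t)) := by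
      rw [ha, hα, Ideal.Quotient.lift_mk, RingHom.comp_apply]
    rw [h3, hφ, MvPolynomial.map_C]
  set β : AdjoinRoot f₀ →+* MvPolynomial (Fin n) (AdjoinRoot p) ⧸ J :=
    AdjoinRoot.lift α w hβ0 with hβ
  -- β ∘ ψ = mk J
  have hcomp : β.comp ψ = Ideal.Quotient.mk J := by
    apply MvPolynomial.ringHom_ext
    · intro r
      -- r : (AdjoinRoot p); both sides as ring homs (AdjoinRoot p) → Sq/J
      have key : (β.comp χ) = (Ideal.Quotient.mk J).comp MvPolynomial.C := by
        have hsurj := AdjoinRoot.mk_surjective (g := p)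
        have hext : ((β.comp χ).comp (AdjoinRoot.mk p))
            = (((Ideal.Quotient.mk J).comp MvPolynomial.C).comp (AdjoinRoot.mk p)) := by
          apply Polynomial.ringHom_ext
          · intro r₀
            have h1 : AdjoinRoot.mk p (Polynomial.C r₀) = AdjoinRoot.of p r₀ := rfl
            simp only [RingHom.comp_apply, h1, hχ, AdjoinRoot.lift_of]
            have h2 : β (ρ r₀) = α (Ideal.Quotient.mk I (MvPolynomial.C r₀)) := by
              rw [hρ]
              simp only [RingHom.comp_apply, hβ, AdjoinRoot.lift_of]
            rw [h2, hα, Ideal.Quotient.lift_mk]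
            simp only [RingHom.comp_apply, hφ, MvPolynomial.map_C]
            rfl
          · have h1 : AdjoinRoot.mk p Polynomial.X = AdjoinRoot.root p := rfl
            simp only [RingHom.comp_apply, h1, hχ, AdjoinRoot.lift_root, hβ, hw]
        refine RingHom.ext fun r => ?_
        obtain ⟨r', rfl⟩ := hsurj r
        exact congrFun (congrArg DFunLike.coe hext) r'
      calc (β.comp ψ) (MvPolynomial.C r) = β (χ r) := by
            rw [RingHom.comp_apply, hψ, MvPolynomial.eval₂Hom_C]
        _ = Ideal.Quotient.mk J (MvPolynomial.C r) := by
            rw [← RingHom.comp_apply, key]; rfl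
    · intro i
      simp only [RingHom.comp_apply, hψ, MvPolynomial.eval₂Hom_X']
      rw [hβ, AdjoinRoot.lift_of, hα, Ideal.Quotient.lift_mk]
      simp only [RingHom.comp_apply, hφ, MvPolynomial.map_X]
  -- B is reduced
  haveI hBred : IsReduced (AdjoinRoot f₀) := by
    apply reduced_adjoinRoot_pow_sub a _ hq
    · -- primes
      intro P hP haP hqP
      obtain ⟨k, u, huk⟩ := IsDiscreteValuationRing.eq_unit_mul_pow_irreducible hqR ht
      set P' : Ideal (MvPolynomial (Fin n) R) := P.comap (Ideal.Quotient.mk I) with hP'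
      haveI hP'p : P'.IsPrime := Ideal.IsPrime.comap _
      have htP' : MvPolynomial.C t ∉ P' := by
        intro h
        exact haP (by rwa [hP', Ideal.mem_comap] at h)
      have hqP' : ((q : ℕ) : MvPolynomial (Fin n) R) ∈ P' := by
        rw [hP', Ideal.mem_comap]
        simpa using hqP
      have hq' : ((q : ℕ) : MvPolynomial (Fin n) R)
          = MvPolynomial.C (u : R) * (MvPolynomial.C t) ^ k := by
        rw [← map_natCast (MvPolynomial.C : R →+* MvPolynomial (Fin n) R) q, huk]
        rw [map_mul, map_pow]
      rw [hq'] at hqP'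
      have hunit : IsUnit (MvPolynomial.C (u : R) : MvPolynomial (Fin n) R) :=
        u.isUnit.map (MvPolynomial.C : R →+* MvPolynomial (Fin n) R)
      have := (hP'p.mem_or_mem hqP').resolve_left (fun h => hP'p.ne_top (Ideal.eq_top_of_isUnit_mem _ h hunit))
      exact htP' (hP'p.mem_of_pow_mem _ this)
    · -- nonzerodivisor
      intro x hx
      obtain ⟨y, rfl⟩ := Ideal.Quotient.mk_surjective x
      rw [ha, ← map_mul, Ideal.Quotient.eq_zero_iff_mem] at hx
      exact Ideal.Quotient.eq_zero_iff_mem.mpr (hsat y hx)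
  -- Conclusion
  intro f hf
  obtain ⟨m, hm⟩ := hf
  have hψf : IsNilpotent (ψ f) := ⟨m, by rw [← map_pow, hJker _ hm]⟩
  have hψf0 : ψ f = 0 := hψf.eq_zero
  have : Ideal.Quotient.mk J f = 0 := by
    rw [← congrFun (congrArg DFunLike.coe hcomp) f, RingHom.comp_apply, hψf0, map_zero]
  exact Ideal.Quotient.eq_zero_iff_mem.mp this
end

section
/- Let k be an algebraically closed field of characteristic 0, let m ≥ 0 be an integer, and let K = k((t_1))…((t_m)) be the m-fold iterated formal Laurent series field over k. Let d be a prime number and let f ∈ K[X] be a monic irreducible polynomial of degree d whose coefficient of X^{d-1} is zero (equivalently, f^{(d-1)}(0) = 0). Then f(0) is not a d-th power in K^×. -/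
/-- Auxiliary construction: the pair (`k((t₁))…((t_m))`, its field structure). -/
noncomputable def IterLaurentAux (k : Type) (fk : Field k) : ℕ → Σ T : Type, Field T
  | 0 => ⟨k, fk⟩
  | m + 1 =>
    letI := (IterLaurentAux k fk m).2
    ⟨LaurentSeries (IterLaurentAux k fk m).1,
      inferInstanceAs (Field (LaurentSeries (IterLaurentAux k fk m).1))⟩

/-- The iterated Laurent series field `k((t₁))…((t_m))`. -/
noncomputable def IterLaurent (k : Type) [fk : Field k] (m : ℕ) : Type :=
  (IterLaurentAux k fk m).1

noncomputable instance (k : Type) [fk : Field k] (m : ℕ) : Field (IterLaurent k m) :=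
  (IterLaurentAux k fk m).2

open Polynomial
open scoped Multiplicative

/-! ### Hensel factorization over power series rings -/

noncomputable def henselUV {F : Type} [Field F] (g₀ h₀ b : Polynomial F)
    (Fn : ℕ → Polynomial F) : ℕ → Polynomial F × Polynomial F
  | 0 => (g₀, h₀)
  | n + 1 =>
    let E : Polynomial F := Fn (n + 1) -
      ∑ i ∈ (Finset.range n).attach,
        (henselUV g₀ h₀ b Fn (i.1 + 1)).1 * (henselUV g₀ h₀ b Fn (n - i.1)).2
    ((b * E) %ₘ g₀, (E - ((b * E) %ₘ g₀) * h₀) /ₘ g₀)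
decreasing_by
  · have := Finset.mem_range.mp i.2; omega
  · omega

section Hensel

variable {F : Type} [Field F] (g₀ h₀ a b : Polynomial F) (Fn : ℕ → Polynomial F)

/-- the error term -/
noncomputable def henselE (n : ℕ) : Polynomial F :=
  Fn (n + 1) - ∑ i ∈ Finset.range n,
    (henselUV g₀ h₀ b Fn (i + 1)).1 * (henselUV g₀ h₀ b Fn (n - i)).2

lemma henselUV_zero : henselUV g₀ h₀ b Fn 0 = (g₀, h₀) := by rw [henselUV]

lemma henselUV_succ (n : ℕ) :
    henselUV g₀ h₀ b Fn (n + 1) =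
      ((b * henselE g₀ h₀ b Fn n) %ₘ g₀,
       (henselE g₀ h₀ b Fn n - ((b * henselE g₀ h₀ b Fn n) %ₘ g₀) * h₀) /ₘ g₀) := by
  rw [henselUV]
  simp only [henselE]
  rw [Finset.sum_attach (Finset.range n)
    (fun i => (henselUV g₀ h₀ b Fn (i + 1)).1 * (henselUV g₀ h₀ b Fn (n - i)).2)]

lemma henselUV_key (hg : g₀.Monic) (hab : a * g₀ + b * h₀ = 1) (n : ℕ) :
    (henselUV g₀ h₀ b Fn (n + 1)).1 * h₀ + (henselUV g₀ h₀ b Fn (n + 1)).2 * g₀ =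
      henselE g₀ h₀ b Fn n := by
  set E := henselE g₀ h₀ b Fn n with hE
  rw [henselUV_succ]
  dsimp only
  set u := (b * E) %ₘ g₀ with hu
  have hdvd : g₀ ∣ E - u * h₀ := by
    have h1 : u = b * E - g₀ * (b * E /ₘ g₀) := by
      rw [hu, modByMonic_eq_sub_mul_div _ g₀]
    refine ⟨a * E + (b * E /ₘ g₀) * h₀, ?_⟩
    rw [h1]
    linear_combination (-E) * hab
  have hmod : (E - u * h₀) %ₘ g₀ = 0 := (modByMonic_eq_zero_iff_dvd hg).2 hdvd
  have := modByMonic_add_div (E - u * h₀) g₀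
  rw [hmod, zero_add] at this
  rw [mul_comm ((E - u * h₀) /ₘ g₀) g₀, this]
  ring

lemma henselU_degree_lt (hg : g₀.Monic) (n : ℕ) :
    ((henselUV g₀ h₀ b Fn (n + 1)).1).degree < g₀.degree := by
  rw [henselUV_succ]
  exact degree_modByMonic_lt _ hg

lemma henselU_natDegree_le (hg : g₀.Monic) (n : ℕ) :
    ((henselUV g₀ h₀ b Fn n).1).natDegree ≤ g₀.natDegree := by
  cases n with
  | zero => rw [henselUV_zero]
  | succ n => exact natDegree_le_natDegree (le_of_lt (henselU_degree_lt g₀ h₀ b Fn hg n))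

lemma henselV_natDegree_le (hg : g₀.Monic) {N : ℕ} (hh : h₀.natDegree ≤ N)
    (hFn : ∀ n, (Fn n).natDegree ≤ g₀.natDegree + N) (n : ℕ) :
    ((henselUV g₀ h₀ b Fn n).2).natDegree ≤ N := by
  induction n using Nat.strong_induction_on with
  | _ n ih =>
    match n with
    | 0 => rw [henselUV_zero]; exact hh
    | n + 1 =>
      rw [henselUV_succ]
      dsimp only
      have hE : (henselE g₀ h₀ b Fn n).natDegree ≤ g₀.natDegree + N := by
        refine (natDegree_sub_le _ _).trans (max_le (hFn _) ?_)
        refine (natDegree_sum_le _ _).trans ?_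
        rw [Finset.fold_max_le]
        refine ⟨Nat.zero_le _, fun i hi => ?_⟩
        refine natDegree_mul_le.trans (add_le_add (henselU_natDegree_le g₀ h₀ b Fn hg _)
          (ih (n - i) (by omega)))
      have h2 : (henselE g₀ h₀ b Fn n -
          ((b * henselE g₀ h₀ b Fn n) %ₘ g₀) * h₀).natDegree ≤ g₀.natDegree + N := by
        refine (natDegree_sub_le _ _).trans (max_le hE ?_)
        exact natDegree_mul_le.trans (add_le_add
          (natDegree_le_natDegree (le_of_lt (degree_modByMonic_lt _ hg)))
          hh)
      calc ((henselE g₀ h₀ b Fn n -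
          ((b * henselE g₀ h₀ b Fn n) %ₘ g₀) * h₀) /ₘ g₀).natDegree
          = (henselE g₀ h₀ b Fn n -
            ((b * henselE g₀ h₀ b Fn n) %ₘ g₀) * h₀).natDegree - g₀.natDegree :=
            natDegree_divByMonic _ hg
        _ ≤ N := by omega

lemma henselUV_sum (hg : g₀.Monic) (hab : a * g₀ + b * h₀ = 1) (hF0 : Fn 0 = g₀ * h₀) :
    ∀ n, ∑ i ∈ Finset.range (n + 1),
      (henselUV g₀ h₀ b Fn i).1 * (henselUV g₀ h₀ b Fn (n - i)).2 = Fn n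
  | 0 => by simp [henselUV_zero, hF0]
  | (n+1) => by
    have hkey := henselUV_key g₀ h₀ a b Fn hg hab n
    rw [Finset.sum_range_succ', Finset.sum_range_succ]
    simp only [Nat.succ_sub_succ, henselUV_zero, Nat.sub_zero, Nat.sub_self]
    have hE : ∑ i ∈ Finset.range n,
        (henselUV g₀ h₀ b Fn (i+1)).1 * (henselUV g₀ h₀ b Fn (n-i)).2
        = Fn (n+1) - henselE g₀ h₀ b Fn n := by
      rw [henselE]; ring
    rw [hE]
    linear_combination hkey

lemma natDegree_assemble {R : Type*} [Semiring R] {M : ℕ} (c : ℕ → R) :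
    (∑ i ∈ Finset.range (M+1), monomial i (c i)).natDegree ≤ M := by
  refine (natDegree_sum_le _ _).trans ?_
  rw [Finset.fold_max_le]
  exact ⟨Nat.zero_le _, fun i hi => (natDegree_monomial_le _).trans
    (by simpa using Nat.lt_succ_iff.mp (Finset.mem_range.mp hi))⟩

lemma coeff_assemble (M : ℕ) (W : ℕ → Polynomial F) (hW : ∀ n, (W n).natDegree ≤ M) (j : ℕ) :
    (∑ i ∈ Finset.range (M+1),
      monomial i (PowerSeries.mk fun n => (W n).coeff i)).coeff j
      = PowerSeries.mk fun n => (W n).coeff j := by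
  rw [finset_sum_coeff]
  simp only [coeff_monomial]
  rw [Finset.sum_ite_eq' (Finset.range (M+1)) j]
  by_cases h : j ∈ Finset.range (M+1)
  · rw [if_pos h]
  · rw [if_neg h]
    ext n
    simp only [PowerSeries.coeff_mk, map_zero]
    exact (coeff_eq_zero_of_natDegree_lt ((hW n).trans_lt
      (by simp only [Finset.mem_range] at h; omega))).symm

end Hensel

theorem hensel_factorization {F : Type} [Field F] (f : Polynomial (PowerSeries F))
    (g₀ h₀ : Polynomial F) (hg : g₀.Monic) (hcop : IsCoprime g₀ h₀)
    (hred : f.map (PowerSeries.constantCoeff (R := F)) = g₀ * h₀) :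
    ∃ g h : Polynomial (PowerSeries F), f = g * h ∧ g.Monic ∧ g.natDegree = g₀.natDegree := by
  obtain ⟨a, b, hab⟩ := hcop
  set s := g₀.natDegree with hs
  set N := f.natDegree + h₀.natDegree with hN
  set Fn : ℕ → Polynomial F :=
    fun n => ∑ j ∈ f.support, monomial j (PowerSeries.coeff (R := F) n (f.coeff j)) with hFn
  have hFncoeff : ∀ n j, (Fn n).coeff j = PowerSeries.coeff (R := F) n (f.coeff j) := by
    intro n j
    rw [hFn]
    rw [finset_sum_coeff]
    simp only [coeff_monomial]
    rw [Finset.sum_ite_eq' f.support j]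
    by_cases h : j ∈ f.support
    · rw [if_pos h]
    · rw [if_neg h, notMem_support_iff.mp h, map_zero]
  have hFdeg' : ∀ n, (Fn n).natDegree ≤ s + N := by
    intro n
    rw [hFn]
    refine (natDegree_sum_le _ _).trans ?_
    rw [Finset.fold_max_le]
    refine ⟨Nat.zero_le _, fun j hj => (natDegree_monomial_le _).trans ?_⟩
    have := le_natDegree_of_mem_supp j hj
    omega
  have hF0 : Fn 0 = g₀ * h₀ := by
    rw [← hred]
    ext j
    rw [hFncoeff 0 j, coeff_map, PowerSeries.coeff_zero_eq_constantCoeff]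
  have hhN : h₀.natDegree ≤ N := by omega
  have hUdeg := henselU_natDegree_le g₀ h₀ b Fn hg
  have hVdeg := henselV_natDegree_le g₀ h₀ b Fn hg hhN hFdeg'
  set U := fun n => (henselUV g₀ h₀ b Fn n).1 with hU
  set V := fun n => (henselUV g₀ h₀ b Fn n).2 with hV
  set g : Polynomial (PowerSeries F) :=
    ∑ i ∈ Finset.range (s+1), monomial i (PowerSeries.mk fun n => (U n).coeff i) with hgdef
  set h : Polynomial (PowerSeries F) :=
    ∑ i ∈ Finset.range (N+1), monomial i (PowerSeries.mk fun n => (V n).coeff i) with hhdef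
  have hgc : ∀ j, g.coeff j = PowerSeries.mk fun n => (U n).coeff j :=
    coeff_assemble s U hUdeg
  have hhc : ∀ j, h.coeff j = PowerSeries.mk fun n => (V n).coeff j :=
    coeff_assemble N V hVdeg
  have hsum := henselUV_sum g₀ h₀ a b Fn hg hab hF0
  have hmul : f = g * h := by
    ext j n
    rw [← hFncoeff n j, coeff_mul]
    rw [map_sum]
    have : ∀ p ∈ Finset.HasAntidiagonal.antidiagonal j, PowerSeries.coeff (R := F) n (g.coeff p.1 * h.coeff p.2)
        = ∑ q ∈ Finset.HasAntidiagonal.antidiagonal n, (U q.1).coeff p.1 * (V q.2).coeff p.2 := by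
      intro p _
      rw [hgc, hhc, PowerSeries.coeff_mul]
      simp only [PowerSeries.coeff_mk]
    rw [Finset.sum_congr rfl this, Finset.sum_comm]
    have : ∀ q ∈ Finset.HasAntidiagonal.antidiagonal n,
        ∑ p ∈ Finset.HasAntidiagonal.antidiagonal j, (U q.1).coeff p.1 * (V q.2).coeff p.2
        = (U q.1 * V q.2).coeff j := by
      intro q _
      rw [coeff_mul]
    rw [Finset.sum_congr rfl this, ← finset_sum_coeff]
    rw [Finset.Nat.sum_antidiagonal_eq_sum_range_succ_mk]
    rw [hsum n]
  have hgcoeffs : g.coeff s = 1 := by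
    rw [hgc]
    ext n
    rw [PowerSeries.coeff_mk, PowerSeries.coeff_one]
    cases n with
    | zero => simp only [hU, henselUV_zero, if_pos rfl]; exact hg.coeff_natDegree
    | succ n =>
      rw [if_neg (Nat.succ_ne_zero n)]
      refine coeff_eq_zero_of_degree_lt ?_
      have h1 := henselU_degree_lt g₀ h₀ b Fn hg n
      rwa [degree_eq_natDegree hg.ne_zero] at h1
  have hgdeg_le : g.natDegree ≤ s := natDegree_assemble _
  have hgmonic : g.Monic := monic_of_natDegree_le_of_coeff_eq_one s hgdeg_le hgcoeffs
  refine ⟨g, h, hmul, hgmonic, le_antisymm hgdeg_le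
    (le_natDegree_of_ne_zero (by rw [hgcoeffs]; exact one_ne_zero))⟩

/-! ### Valuation facts for Laurent series -/

section LS
variable {F : Type} [Field F]

lemma val_coe_le_one (p : PowerSeries F) :
    Valued.v ((HahnSeries.ofPowerSeries ℤ F) p : LaurentSeries F) ≤ 1 := by
  rw [LaurentSeries.val_le_one_iff_eq_coe]
  exact ⟨p, rfl⟩

lemma val_lt_one_iff (p : PowerSeries F) :
    Valued.v ((HahnSeries.ofPowerSeries ℤ F) p : LaurentSeries F) < 1 ↔
      PowerSeries.constantCoeff (R := F) p = 0 := by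
  have h1 : Valued.v ((HahnSeries.ofPowerSeries ℤ F) p : LaurentSeries F) < 1 ↔
      Valued.v ((HahnSeries.ofPowerSeries ℤ F) p : LaurentSeries F) ≤
        WithZero.exp (-1 : ℤ) := by
    rw [WithZero.exp_eq_coe_ofAdd]
    rcases eq_or_ne (Valued.v ((HahnSeries.ofPowerSeries ℤ F) p : LaurentSeries F)) 0 with h | h
    · rw [h]
      simp only [zero_le', iff_true, zero_lt_one]
    · obtain ⟨m, hm⟩ := WithZero.ne_zero_iff_exists.mp h
      rw [← hm, ← WithZero.coe_one, WithZero.coe_lt_coe, WithZero.coe_le_coe,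
        ← Multiplicative.toAdd_lt, ← Multiplicative.toAdd_le]
      simp only [toAdd_one, toAdd_ofAdd]
      omega
  rw [h1, LaurentSeries.valuation_le_iff_coeff_lt_eq_zero F]
  constructor
  · intro h
    have h0 := h 0 one_pos
    rw [PowerSeries.coeff_coe, if_neg (lt_irrefl (0:ℤ))] at h0
    rwa [← PowerSeries.coeff_zero_eq_constantCoeff]
  · intro h n hn
    rw [PowerSeries.coeff_coe]
    split_ifs with hneg
    · rfl
    · have : n = 0 := by omega
      subst this
      simpa using h

lemma exists_lift (f₁ : Polynomial (LaurentSeries F))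
    (hint : ∀ j, Valued.v (f₁.coeff j) ≤ 1) :
    ∃ fO : Polynomial (PowerSeries F),
      fO.map (HahnSeries.ofPowerSeries ℤ F) = f₁ ∧ fO.natDegree ≤ f₁.natDegree := by
  choose p hp using fun j => (LaurentSeries.val_le_one_iff_eq_coe F (f₁.coeff j)).mp (hint j)
  refine ⟨∑ j ∈ Finset.range (f₁.natDegree + 1), monomial j (p j), ?_, natDegree_assemble _⟩
  rw [Polynomial.map_sum]
  simp only [Polynomial.map_monomial]
  simp only [hp]
  exact (f₁.as_sum_range' _ (Nat.lt_succ_self _)).symm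

lemma no_split (fO : Polynomial (PowerSeries F))
    (hirr : Irreducible (fO.map (HahnSeries.ofPowerSeries ℤ F)))
    (g₀ h₀ : Polynomial F) (hg : g₀.Monic) (hcop : IsCoprime g₀ h₀)
    (hred : fO.map (PowerSeries.constantCoeff (R := F)) = g₀ * h₀)
    (h1 : 1 ≤ g₀.natDegree)
    (h2 : g₀.natDegree < (fO.map (HahnSeries.ofPowerSeries ℤ F)).natDegree) :
    False := by
  obtain ⟨g, h, hmul, hgm, hgd⟩ := hensel_factorization fO g₀ h₀ hg hcop hred
  have hfact : fO.map (HahnSeries.ofPowerSeries ℤ F) =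
      g.map (HahnSeries.ofPowerSeries ℤ F) * h.map (HahnSeries.ofPowerSeries ℤ F) := by
    rw [hmul, Polynomial.map_mul]
  have hAm : (g.map (HahnSeries.ofPowerSeries ℤ F)).Monic := hgm.map _
  have hAdeg : (g.map (HahnSeries.ofPowerSeries ℤ F)).natDegree = g₀.natDegree := by
    rw [hgm.natDegree_map]; exact hgd
  have hB0 : h.map (HahnSeries.ofPowerSeries ℤ F) ≠ 0 := by
    intro hB
    rw [hB, mul_zero] at hfact
    exact hirr.ne_zero hfact
  rcases hirr.isUnit_or_isUnit hfact with hu | hu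
  · have := natDegree_eq_zero_of_isUnit hu; omega
  · have h3 := natDegree_eq_zero_of_isUnit hu
    have h4 : (fO.map (HahnSeries.ofPowerSeries ℤ F)).natDegree =
        g₀.natDegree + (h.map (HahnSeries.ofPowerSeries ℤ F)).natDegree := by
      rw [hfact, natDegree_mul hAm.ne_zero hB0, hAdeg]
    omega

end LS

/-! ### Irreducibility transfer -/

lemma Irreducible.mulEquiv_map {M N : Type*} [Monoid M] [Monoid N] (e : M ≃* N) {x : M}
    (h : Irreducible x) : Irreducible (e x) := by
  constructor
  · intro hu
    exact h.not_isUnit (by simpa using hu.map e.symm.toMonoidHom)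
  · intro p q hpq
    have hx : x = e.symm p * e.symm q := by
      rw [← map_mul]
      simp [← hpq]
    rcases h.isUnit_or_isUnit hx with hu | hu
    · left; simpa using hu.map e.toMonoidHom
    · right; simpa using hu.map e.toMonoidHom

lemma irreducible_comp_scale {L : Type*} [Field L] {p : Polynomial L} (hp : Irreducible p)
    {τ : L} (hτ : τ ≠ 0) : Irreducible (p.comp (C τ * X)) := by
  have h1 : (aeval (C τ * X : L[X])).comp (aeval (C τ⁻¹ * X : L[X])) = AlgHom.id L L[X] := by
    apply Polynomial.algHom_ext
    simp only [AlgHom.coe_comp, Function.comp_apply, aeval_X, AlgHom.coe_id, id_eq, map_mul,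
      aeval_C]
    rw [algebraMap_eq, ← mul_assoc, ← C_mul, inv_mul_cancel₀ hτ, C_1, one_mul]
  have h2 : (aeval (C τ⁻¹ * X : L[X])).comp (aeval (C τ * X : L[X])) = AlgHom.id L L[X] := by
    apply Polynomial.algHom_ext
    simp only [AlgHom.coe_comp, Function.comp_apply, aeval_X, AlgHom.coe_id, id_eq, map_mul,
      aeval_C]
    rw [algebraMap_eq, ← mul_assoc, ← C_mul, mul_inv_cancel₀ hτ, C_1, one_mul]
  let e : L[X] ≃ₐ[L] L[X] := AlgEquiv.ofAlgHom (aeval (C τ * X)) (aeval (C τ⁻¹ * X)) h1 h2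
  have he : p.comp (C τ * X) = e p := comp_eq_aeval
  rw [he]
  exact hp.mulEquiv_map e.toMulEquiv

lemma coeff_comp_C_mul_X {R : Type*} [CommSemiring R] (p : R[X]) (t : R) (j : ℕ) :
    (p.comp (C t * X)).coeff j = p.coeff j * t ^ j := by
  rw [comp_eq_sum_left, Polynomial.sum_def, finset_sum_coeff]
  have h : ∀ e ∈ p.support, (C (p.coeff e) * (C t * X) ^ e).coeff j
      = if e = j then p.coeff e * t ^ e else 0 := by
    intro e _
    rw [mul_pow, ← C_pow, ← mul_assoc, ← C_mul, coeff_C_mul, coeff_X_pow]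
    split_ifs with h1 h2 h2
    · rw [mul_one]
    · exact absurd h1.symm h2
    · exact absurd h2.symm h1
    · rw [mul_zero]
  rw [Finset.sum_congr rfl h, Finset.sum_ite_eq' p.support j]
  by_cases hj : j ∈ p.support
  · rw [if_pos hj]
  · rw [if_neg hj, notMem_support_iff.mp hj, zero_mul]

/-! ### Integrality of coefficients of monic irreducible polynomials -/

section Integral
variable {F : Type} [Field F]

lemma coeffs_integral (f₁ : Polynomial (LaurentSeries F))
    (hirr : Irreducible f₁) (hmonic : f₁.Monic)
    (h0 : Valued.v (f₁.coeff 0) ≤ 1) : ∀ j, Valued.v (f₁.coeff j) ≤ 1 := by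
  by_contra hcon
  push_neg at hcon
  obtain ⟨j₀, hj₀⟩ := hcon
  set n := f₁.natDegree with hn
  have hn1 : 1 ≤ n := by
    by_contra h
    have h' : n = 0 := by omega
    exact not_irreducible_one (by rwa [hmonic.natDegree_eq_zero.mp h'] at hirr)
  have hj₀n : j₀ ≤ n := by
    by_contra h
    rw [coeff_eq_zero_of_natDegree_lt (by omega), map_zero] at hj₀
    exact absurd hj₀ (not_lt.mpr zero_le')
  set T := (Finset.range (n+1)).image (fun j => Valued.v (f₁.coeff j)) with hT
  have hTne : T.Nonempty :=
    ⟨_, Finset.mem_image_of_mem _ (Finset.mem_range.mpr (by omega : j₀ < n+1))⟩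
  set M := T.max' hTne with hM
  have hM_ge : ∀ j, j ≤ n → Valued.v (f₁.coeff j) ≤ M := fun j hj =>
    Finset.le_max' T _ (Finset.mem_image_of_mem _ (Finset.mem_range.mpr (by omega)))
  have hM1 : (1 : WithZero (Multiplicative ℤ)) < M := lt_of_lt_of_le hj₀ (hM_ge j₀ hj₀n)
  have hM0 : M ≠ 0 := by
    intro h; rw [h] at hM1; exact absurd hM1 (not_lt.mpr zero_le')
  set R := (Finset.range (n+1)).filter (fun j => Valued.v (f₁.coeff j) = M) with hR
  have hRne : R.Nonempty := by
    obtain ⟨x, hx, hxv⟩ := Finset.mem_image.mp (T.max'_mem hTne)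
    exact ⟨x, Finset.mem_filter.mpr ⟨hx, hxv⟩⟩
  set r := R.max' hRne with hr
  have hrR := R.max'_mem hRne
  have hrM : Valued.v (f₁.coeff r) = M := (Finset.mem_filter.mp hrR).2
  have hrn : r ≤ n :=
    Nat.lt_succ_iff.mp (Finset.mem_range.mp (Finset.mem_filter.mp hrR).1)
  have hlt : ∀ j, r < j → Valued.v (f₁.coeff j) < M := by
    intro j hj
    by_cases hjn : j ≤ n
    · refine lt_of_le_of_ne (hM_ge j hjn) ?_
      intro h
      have hjR : j ∈ R := Finset.mem_filter.mpr ⟨Finset.mem_range.mpr (by omega), h⟩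
      have := Finset.le_max' R j hjR
      omega
    · rw [coeff_eq_zero_of_natDegree_lt (by omega), map_zero]
      exact zero_lt_one.trans hM1
  have hr0 : r ≠ 0 := by
    intro h
    rw [h] at hrM
    have h0' := h0
    rw [hrM] at h0'
    exact absurd h0' (not_le.mpr hM1)
  have hrn' : r ≠ n := by
    intro h
    have h2 : Valued.v (f₁.coeff n) = 1 := by
      rw [show f₁.coeff n = 1 from hmonic.coeff_natDegree, map_one]
    rw [h, h2] at hrM
    exact absurd hrM.symm (ne_of_gt hM1)
  obtain ⟨mM, hmM⟩ := WithZero.ne_zero_iff_exists.mp hM0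
  set σ : LaurentSeries F := HahnSeries.single (Multiplicative.toAdd mM) 1 with hσ
  have hvσ : Valued.v σ = M⁻¹ := by
    rw [hσ, LaurentSeries.valuation_single_zpow, ← hmM]
    rw [WithZero.exp_neg, WithZero.exp_eq_coe_ofAdd, ofAdd_toAdd]
  have hσ0 : σ ≠ 0 := HahnSeries.single_ne_zero one_ne_zero
  set q₁ := C σ * f₁ with hq₁
  have hq₁coeff : ∀ j, q₁.coeff j = σ * f₁.coeff j := fun j => coeff_C_mul _
  have hq₁int : ∀ j, Valued.v (q₁.coeff j) ≤ 1 := by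
    intro j
    rw [hq₁coeff, map_mul, hvσ]
    by_cases hjn : j ≤ n
    · calc M⁻¹ * Valued.v (f₁.coeff j) ≤ M⁻¹ * M := mul_le_mul_right (hM_ge j hjn) _
        _ = 1 := inv_mul_cancel₀ hM0
    · rw [coeff_eq_zero_of_natDegree_lt (by omega), map_zero, mul_zero]
      exact zero_le'
  obtain ⟨qO, hqO, hqOdeg⟩ := exists_lift q₁ hq₁int
  have hq₁deg : q₁.natDegree = n := by rw [hq₁, natDegree_C_mul hσ0]
  have hcoeffO : ∀ j, (HahnSeries.ofPowerSeries ℤ F) (qO.coeff j) = q₁.coeff j :=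
    fun j => by rw [← hqO, coeff_map]
  set qbar := qO.map (PowerSeries.constantCoeff (R := F)) with hqbar
  have hqbar_coeff : ∀ j, qbar.coeff j = PowerSeries.constantCoeff (R := F) (qO.coeff j) :=
    fun j => coeff_map _ _
  have hAr : qbar.coeff r ≠ 0 := by
    rw [hqbar_coeff]
    intro h
    have h2 := (val_lt_one_iff _).mpr h
    rw [hcoeffO, hq₁coeff, map_mul, hvσ, hrM, inv_mul_cancel₀ hM0] at h2
    exact lt_irrefl 1 h2
  have hAtop : ∀ j, r < j → qbar.coeff j = 0 := by
    intro j hj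
    rw [hqbar_coeff]
    apply (val_lt_one_iff _).mp
    rw [hcoeffO]
    refine lt_of_le_of_ne (hq₁int j) ?_
    intro heq
    rw [hq₁coeff, map_mul, hvσ, inv_mul_eq_one₀ hM0] at heq
    exact (ne_of_lt (hlt j hj)) heq.symm
  have hA0 : qbar.coeff 0 = 0 := by
    rw [hqbar_coeff]
    apply (val_lt_one_iff _).mp
    rw [hcoeffO, hq₁coeff, map_mul, hvσ]
    calc M⁻¹ * Valued.v (f₁.coeff 0) ≤ M⁻¹ * 1 := mul_le_mul_right h0 _
      _ = M⁻¹ := mul_one _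
      _ < 1 := by rw [inv_lt_one₀ (zero_lt_one.trans hM1)]; exact hM1
  have hqbar_ne : qbar ≠ 0 := fun h => hAr (by rw [h, coeff_zero])
  have hqbar_deg : qbar.natDegree = r :=
    le_antisymm (natDegree_le_iff_coeff_eq_zero.mpr hAtop) (le_natDegree_of_ne_zero hAr)
  obtain ⟨w, hw, hwndvd⟩ := qbar.exists_eq_pow_rootMultiplicity_mul_and_not_dvd hqbar_ne 0
  rw [C_0, sub_zero] at hw hwndvd
  set s₀ := qbar.rootMultiplicity 0 with hs₀
  have hs₀pos : 0 < s₀ := (rootMultiplicity_pos hqbar_ne).mpr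
    (by rw [IsRoot.def, ← coeff_zero_eq_eval_zero]; exact hA0)
  have hw0 : w ≠ 0 := by rintro rfl; rw [mul_zero] at hw; exact hqbar_ne hw
  have hs₀r : s₀ + w.natDegree = r := by
    rw [← hqbar_deg, hw, natDegree_mul (pow_ne_zero _ X_ne_zero) hw0, natDegree_pow,
      natDegree_X, mul_one]
  refine no_split qO ?_ (X^s₀) w (monic_X_pow _)
    ((Polynomial.irreducible_X.coprime_iff_not_dvd.mpr hwndvd).pow_left) hw ?_ ?_
  · rw [hqO, hq₁]
    exact (irreducible_isUnit_mul (isUnit_C.mpr (isUnit_iff_ne_zero.mpr hσ0))).mpr hirr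
  · rw [natDegree_X_pow]; omega
  · rw [natDegree_X_pow, hqO, hq₁deg]; omega

end Integral

/-! ### Power extraction -/

lemma extract_pow {F : Type} [Field F] (q : Polynomial F) (hq : q.Monic) (hqi : Irreducible q)
    (p : Polynomial F) (hp : p.Monic) : ∃ e w, p = q ^ e * w ∧ w.Monic ∧ ¬ q ∣ w := by
  have hq1 : 1 ≤ q.natDegree := by
    by_contra h
    have h' : q.natDegree = 0 := by omega
    exact not_irreducible_one (by rwa [hq.natDegree_eq_zero.mp h'] at hqi)
  suffices hgen : ∀ n (p : Polynomial F), p.Monic → p.natDegree = n →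
      ∃ e w, p = q ^ e * w ∧ w.Monic ∧ ¬ q ∣ w from hgen p.natDegree p hp rfl
  intro n
  induction n using Nat.strong_induction_on with
  | _ n IH =>
    intro p hp hn
    by_cases hdvd : q ∣ p
    · obtain ⟨p', hp'⟩ := hdvd
      have hp'm : p'.Monic := by
        have hthis := hp
        rw [hp'] at hthis
        exact hq.of_mul_monic_left hthis
      have hdeg : p.natDegree = q.natDegree + p'.natDegree := by
        rw [hp', natDegree_mul hq.ne_zero hp'm.ne_zero]
      obtain ⟨e, w, h1, h2, h3⟩ := IH p'.natDegree (by omega) p' hp'm rfl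
      exact ⟨e+1, w, by rw [hp', h1, pow_succ]; ring, h2, h3⟩
    · exact ⟨0, p, by rw [pow_zero, one_mul], hp, hdvd⟩

/-! ### The inductive step over Laurent series -/

theorem laurent_step {F : Type} [Field F] [CharZero F] {d : ℕ} (hd : d.Prime)
    (IH : ∀ g : Polynomial F, g.Monic → Irreducible g → g.natDegree = d →
      g.coeff (d-1) = 0 → ¬ ∃ z : F, Polynomial.eval 0 g = z ^ d)
    (f : Polynomial (LaurentSeries F)) (hmonic : f.Monic) (hirr : Irreducible f)
    (hdeg : f.natDegree = d) (hcoeff : f.coeff (d - 1) = 0) :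
    ¬ ∃ y : LaurentSeries F, Polynomial.eval 0 f = y ^ d := by
  rintro ⟨y, hy⟩
  have hd2 : 2 ≤ d := hd.two_le
  have hf0 : f.coeff 0 = y ^ d := by rw [coeff_zero_eq_eval_zero]; exact hy
  have hy0 : y ≠ 0 := by
    rintro rfl
    rw [zero_pow (by omega : d ≠ 0)] at hf0
    obtain ⟨g, hg⟩ := X_dvd_iff.mpr hf0
    have hgne : g ≠ 0 := by
      rintro rfl
      rw [mul_zero] at hg
      exact hirr.ne_zero hg
    rcases hirr.isUnit_or_isUnit hg with hu | hu
    · exact Polynomial.not_isUnit_X hu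
    · have h1 := natDegree_eq_zero_of_isUnit hu
      have h2 : f.natDegree = 1 + g.natDegree := by
        rw [hg, natDegree_mul X_ne_zero hgne, natDegree_X]
      omega
  have hvy : Valued.v y ≠ 0 := (Valuation.ne_zero_iff _).mpr hy0
  obtain ⟨m, hm⟩ := WithZero.ne_zero_iff_exists.mp hvy
  set a : ℤ := -Multiplicative.toAdd m with ha
  set τ : LaurentSeries F := HahnSeries.single a 1 with hτdef
  have hvτ : Valued.v τ = (Multiplicative.ofAdd (-a) : Multiplicative ℤ) :=
    LaurentSeries.valuation_single_zpow F a
  have hτ0 : τ ≠ 0 := HahnSeries.single_ne_zero one_ne_zero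
  have hvτy : Valued.v τ = Valued.v y := by
    rw [hvτ, ← hm]
    congr 1
    rw [ha, neg_neg, ofAdd_toAdd]
  have hvτ0 : Valued.v τ ≠ 0 := (Valuation.ne_zero_iff _).mpr hτ0
  set f₁ : Polynomial (LaurentSeries F) := C (τ⁻¹ ^ d) * (f.comp (C τ * X)) with hf₁def
  have hf₁coeff : ∀ j, f₁.coeff j = f.coeff j * τ ^ j * τ⁻¹ ^ d := by
    intro j
    rw [hf₁def, coeff_C_mul, coeff_comp_C_mul_X]
    ring
  have hτinv0 : τ⁻¹ ^ d ≠ 0 := pow_ne_zero _ (inv_ne_zero hτ0)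
  have hcompdeg : (f.comp (C τ * X)).natDegree = d := by
    rw [natDegree_comp, natDegree_C_mul hτ0, natDegree_X, mul_one, hdeg]
  have hf₁deg : f₁.natDegree = d := by
    rw [hf₁def, natDegree_C_mul hτinv0, hcompdeg]
  have hf₁top : f₁.coeff d = 1 := by
    rw [hf₁coeff d, show f.coeff d = 1 from hdeg ▸ hmonic.coeff_natDegree, one_mul,
      ← mul_pow, mul_inv_cancel₀ hτ0, one_pow]
  have hf₁monic : f₁.Monic := monic_of_natDegree_le_of_coeff_eq_one d (le_of_eq hf₁deg) hf₁top
  have hf₁irr : Irreducible f₁ := by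
    rw [hf₁def]
    exact (irreducible_isUnit_mul (isUnit_C.mpr (isUnit_iff_ne_zero.mpr hτinv0))).mpr
      (irreducible_comp_scale hirr hτ0)
  set u₁ := y * τ⁻¹ with hu₁
  have hvu₁ : Valued.v u₁ = 1 := by
    rw [hu₁, map_mul, map_inv₀, ← hvτy, mul_inv_cancel₀ hvτ0]
  have hf₁0 : f₁.coeff 0 = u₁ ^ d := by
    rw [hf₁coeff, pow_zero, mul_one, hf0, hu₁, mul_pow, inv_pow]
  have hf₁d1 : f₁.coeff (d-1) = 0 := by rw [hf₁coeff, hcoeff, zero_mul, zero_mul]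
  have hint : ∀ j, Valued.v (f₁.coeff j) ≤ 1 :=
    coeffs_integral f₁ hf₁irr hf₁monic (by rw [hf₁0, map_pow, hvu₁, one_pow])
  obtain ⟨fO, hfO, hfOdeg⟩ := exists_lift f₁ hint
  have hινj : Function.Injective (HahnSeries.ofPowerSeries ℤ F) :=
    HahnSeries.ofPowerSeries_injective
  have hcoeffO : ∀ j, (HahnSeries.ofPowerSeries ℤ F) (fO.coeff j) = f₁.coeff j :=
    fun j => by rw [← hfO, coeff_map]
  have hfOd : fO.coeff d = 1 := hινj (by rw [hcoeffO, map_one, hf₁top])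
  have hfOdeg' : fO.natDegree = d :=
    le_antisymm (hfOdeg.trans (le_of_eq hf₁deg))
      (le_natDegree_of_ne_zero (by rw [hfOd]; exact one_ne_zero))
  have hfOmonic : fO.Monic :=
    monic_of_natDegree_le_of_coeff_eq_one d (le_of_eq hfOdeg') hfOd
  set fbar := fO.map (PowerSeries.constantCoeff (R := F)) with hfbar
  have hfbar_monic : fbar.Monic := hfOmonic.map _
  have hfbar_deg : fbar.natDegree = d := by
    rw [hfbar, hfOmonic.natDegree_map]; exact hfOdeg'
  have hfbar_coeff : ∀ j, fbar.coeff j = PowerSeries.constantCoeff (R := F) (fO.coeff j) :=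
    fun j => coeff_map _ _
  have hfbar_d1 : fbar.coeff (d-1) = 0 := by
    rw [hfbar_coeff]
    have h1 : fO.coeff (d-1) = 0 := hινj (by rw [hcoeffO, hf₁d1, map_zero])
    rw [h1, map_zero]
  obtain ⟨uO, huO⟩ := (LaurentSeries.val_le_one_iff_eq_coe F u₁).mp (le_of_eq hvu₁)
  have huOc : PowerSeries.constantCoeff (R := F) uO ≠ 0 := by
    intro h
    have h2 := (val_lt_one_iff uO).mpr h
    rw [huO, hvu₁] at h2
    exact lt_irrefl 1 h2
  have hfO0 : fO.coeff 0 = uO ^ d := hινj (by rw [hcoeffO, map_pow, huO, hf₁0])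
  have hfbar0 : fbar.coeff 0 = (PowerSeries.constantCoeff (R := F) uO) ^ d := by
    rw [hfbar_coeff, hfO0, map_pow]
  have hnosplit : ∀ g₀ h₀ : Polynomial F, g₀.Monic → IsCoprime g₀ h₀ → fbar = g₀ * h₀ →
      1 ≤ g₀.natDegree → g₀.natDegree < d → False := by
    intro g₀ h₀ hg hcop hred h1 h2
    refine no_split fO (by rw [hfO]; exact hf₁irr) g₀ h₀ hg hcop hred h1 ?_
    rw [hfO, hf₁deg]; exact h2
  by_cases hfbar_irr : Irreducible fbar
  · exact (IH fbar hfbar_monic hfbar_irr hfbar_deg hfbar_d1)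
      ⟨_, by rw [← coeff_zero_eq_eval_zero, hfbar0]⟩
  · have hfbar_nunit : ¬ IsUnit fbar := by
      intro hu; have := natDegree_eq_zero_of_isUnit hu; omega
    obtain ⟨q, hqm, hqi, hqdvd⟩ := fbar.exists_monic_irreducible_factor hfbar_nunit
    obtain ⟨e, w, hdecomp, hwm, hwndvd⟩ := extract_pow q hqm hqi fbar hfbar_monic
    have hqdeg : 1 ≤ q.natDegree := by
      by_contra h
      have h' : q.natDegree = 0 := by omega
      exact not_irreducible_one (by rwa [hqm.natDegree_eq_zero.mp h'] at hqi)
    have he : 1 ≤ e := by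
      rcases Nat.eq_zero_or_pos e with h | h
      · rw [h, pow_zero, one_mul] at hdecomp
        exact absurd (hdecomp ▸ hqdvd) hwndvd
      · exact h
    have hdsum : d = e * q.natDegree + w.natDegree := by
      rw [← hfbar_deg, hdecomp, natDegree_mul (pow_ne_zero _ hqm.ne_zero) hwm.ne_zero,
        natDegree_pow]
    by_cases hw1 : w.natDegree = 0
    · have hw : w = 1 := hwm.natDegree_eq_zero.mp hw1
      rw [hw, mul_one] at hdecomp
      have he2 : 2 ≤ e := by
        by_contra h
        have h1 : e = 1 := by omega
        rw [h1, pow_one] at hdecomp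
        exact hfbar_irr (hdecomp ▸ hqi)
      have hdq : d = e * q.natDegree := by omega
      have hed : e = d := by
        rcases hd.eq_one_or_self_of_dvd e ⟨q.natDegree, hdq⟩ with h | h
        · omega
        · exact h
      rw [hed] at hdq
      have hq1 : q.natDegree = 1 := by
        have h5 : d * q.natDegree = d * 1 := by rw [mul_one]; omega
        exact Nat.eq_of_mul_eq_mul_left (by omega) h5
      obtain ⟨c0, hqX⟩ : ∃ c0, q = X + C c0 := ⟨q.coeff 0, hqm.eq_X_add_C hq1⟩
      have hc : fbar.coeff (d-1) = c0 ^ (d - (d-1)) * (d.choose (d-1)) := by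
        rw [hdecomp, hed, hqX, coeff_X_add_C_pow]
      have hdd1 : d - (d-1) = 1 := by omega
      have hchoose : d.choose (d-1) = d := by
        rw [← Nat.choose_symm (by omega : d - 1 ≤ d)]
        simp only [show d - (d-1) = 1 from by omega, Nat.choose_one_right]
      have hcc : c0 = 0 := by
        rw [hfbar_d1, hdd1, pow_one, hchoose] at hc
        have hdne : (d : F) ≠ 0 := Nat.cast_ne_zero.mpr (by omega)
        exact (mul_eq_zero.mp hc.symm).resolve_right hdne
      have hzero : fbar.coeff 0 = 0 := by
        rw [hdecomp, hed, hqX, hcc, C_0, add_zero, coeff_X_pow, if_neg (by omega : ¬ 0 = d)]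
      rw [hfbar0] at hzero
      exact huOc (pow_eq_zero_iff (by omega : d ≠ 0) |>.mp hzero)
    · refine hnosplit (q^e) w (hqm.pow _)
        ((hqi.coprime_iff_not_dvd.mpr hwndvd).pow_left) hdecomp ?_ ?_
      · rw [natDegree_pow]
        exact Nat.one_le_iff_ne_zero.mpr (Nat.mul_ne_zero (by omega) (by omega))
      · rw [natDegree_pow]; omega

/-! ### Instances along the tower -/

lemma laurentSeries_charZero (F : Type) [Field F] [CharZero F] :
    CharZero (LaurentSeries F) :=
  charZero_of_injective_ringHom (f := (HahnSeries.C : F →+* HahnSeries ℤ F))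
    HahnSeries.C_injective

lemma iterLaurent_charZero (k : Type) [Field k] [CharZero k] (m : ℕ) :
    CharZero (IterLaurent k m) := by
  induction m with
  | zero => exact ‹CharZero k›
  | succ m ih => exact @laurentSeries_charZero (IterLaurent k m) _ ih

lemma base_case (k : Type) [Field k] [IsAlgClosed k] {d : ℕ} (hd : 2 ≤ d)
    (f : Polynomial k) (hirr : Irreducible f) (hdeg : f.natDegree = d) : False := by
  have h := IsAlgClosed.degree_eq_one_of_irreducible k hirr
  rw [degree_eq_natDegree hirr.ne_zero, hdeg] at h
  exact absurd (by exact_mod_cast h) (by omega : d ≠ 1)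

theorem iter_aux (k : Type) [Field k] [IsAlgClosed k] [CharZero k] (m : ℕ) :
    ∀ d : ℕ, d.Prime → ∀ f : Polynomial (IterLaurent k m), f.Monic → Irreducible f →
      f.natDegree = d → f.coeff (d-1) = 0 →
      ¬ ∃ y : IterLaurent k m, Polynomial.eval 0 f = y ^ d := by
  induction m with
  | zero =>
    intro d hd f _ hirr hdeg _
    exact fun _ => @base_case k ‹Field k› ‹IsAlgClosed k› d hd.two_le f hirr hdeg
  | succ m IH =>
    intro d hd f hmonic hirr hdeg hcoeff
    haveI : CharZero (IterLaurent k m) := iterLaurent_charZero k m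
    exact laurent_step (F := IterLaurent k m) hd
      (fun g h1 h2 h3 h4 => IH d hd g h1 h2 h3 h4) f hmonic hirr hdeg hcoeff

/-- Let `k` be an algebraically closed field of characteristic `0`,
`K = k((t₁))…((t_m))`, `d` a prime number, and `f ∈ K[X]` a monic irreducible polynomial
of degree `d` whose coefficient of `X^{d-1}` vanishes. Then `f(0)` is not a `d`-th power
in `K`. -/
theorem constant_coeff_not_dth_power (k : Type) [Field k] [IsAlgClosed k] [CharZero k]
    (m : ℕ) (d : ℕ) (hd : d.Prime)
    (f : Polynomial (IterLaurent k m)) (hmonic : f.Monic) (hirr : Irreducible f)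
    (hdeg : f.natDegree = d) (hcoeff : f.coeff (d - 1) = 0) :
    ¬ ∃ y : IterLaurent k m, Polynomial.eval 0 f = y ^ d :=
  iter_aux k m d hd f hmonic hirr hdeg hcoeff
end
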